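/- Let G be a finite simple graph on n ≥ 36 vertices with minimum degree at least 6 that contains no subgraph isomorphic to the complete graph K₇. Then the number of odd components of G satisfies 7·odd(G) ≤ n − 8. -/

import Mathlib

open SimpleGraph

/-- If `G` is a finite simple graph on `n ≥ 36` vertices with minimum degree at least 6
containing no subgraph isomorphic to `K₇`, then `7 · odd(G) ≤ n - 8`. -/
theorem stmt_7 {V : Type*} [Fintype V] (G : SimpleGraph V) [DecidableRel G.Adj]
    (hn : 36 ≤ Fintype.card V)
    (hδ : ∀ v : V, 6 ≤ G.degree v) (hK7 : G.CliqueFree 7) :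
    7 * {c : G.ConnectedComponent | Odd c.supp.ncard}.ncard ≤ Fintype.card V - 8 := by
  classical
  haveI : Fintype G.ConnectedComponent := Fintype.ofFinite _
  -- supp as a Finset
  set sc : G.ConnectedComponent → Finset V :=
    fun c => Finset.univ.filter (fun v => G.connectedComponentMk v = c) with hsc
  have hmem : ∀ (c : G.ConnectedComponent) (v : V),
      v ∈ sc c ↔ G.connectedComponentMk v = c := by
    intro c v; simp [hsc]
  have hsupp_card : ∀ c : G.ConnectedComponent, c.supp.ncard = (sc c).card := by
    intro c
    rw [Set.ncard_eq_toFinset_card']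
    congr 1
    ext v
    simp [hsc, ConnectedComponent.mem_supp_iff]
  -- neighbors stay in the component
  have hnbr : ∀ (c : G.ConnectedComponent) (v : V), v ∈ sc c →
      G.neighborFinset v ⊆ (sc c).erase v := by
    intro c v hv w hw
    rw [mem_neighborFinset] at hw
    refine Finset.mem_erase.2 ⟨fun h => G.loopless.irrefl v (h ▸ hw), ?_⟩
    rw [hmem] at hv ⊢
    rw [← hv]
    exact ConnectedComponent.sound hw.symm.reachable
  -- each odd component has at least 9 vertices
  have key : ∀ c : G.ConnectedComponent, Odd c.supp.ncard → 9 ≤ (sc c).card := by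
    intro c hodd
    rw [hsupp_card] at hodd
    obtain ⟨v, hv⟩ := c.exists_rep
    have hvmem : v ∈ sc c := (hmem c v).2 hv
    have h7 : 7 ≤ (sc c).card := by
      have h1 := Finset.card_le_card (hnbr c v hvmem)
      have h2 : (G.neighborFinset v).card = G.degree v := G.card_neighborFinset_eq_degree v
      have h3 := Finset.card_erase_of_mem hvmem
      have h4 := hδ v
      omega
    have hne7 : (sc c).card ≠ 7 := by
      intro h7eq
      apply hK7 (sc c)
      constructor
      · intro a ha b hb hab
        have hsub := hnbr c a ha
        have : G.neighborFinset a = (sc c).erase a := by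
          apply Finset.eq_of_subset_of_card_le hsub
          rw [Finset.card_erase_of_mem ha, h7eq,
            G.card_neighborFinset_eq_degree a]
          have := hδ a; omega
        have hb' : b ∈ G.neighborFinset a := by
          rw [this]; exact Finset.mem_erase.2 ⟨fun h => hab (h ▸ rfl), hb⟩
        exact (mem_neighborFinset G a b).1 hb'
      · exact h7eq
    obtain ⟨k, hk⟩ := hodd
    omega
  -- counting
  set S : Set G.ConnectedComponent := {c | Odd c.supp.ncard} with hS
  have hScard : S.ncard = S.toFinset.card := Set.ncard_eq_toFinset_card' S
  have hsum_le : ∑ c ∈ S.toFinset, (sc c).card ≤ Fintype.card V := by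
    have htot : (Finset.univ : Finset V).card =
        ∑ c ∈ (Finset.univ : Finset G.ConnectedComponent), (sc c).card :=
      Finset.card_eq_sum_card_fiberwise (fun v _ => Finset.mem_univ _)
    rw [← Finset.card_univ, htot]
    exact Finset.sum_le_sum_of_subset (Finset.subset_univ _)
  have h9 : 9 * S.toFinset.card ≤ ∑ c ∈ S.toFinset, (sc c).card := by
    calc 9 * S.toFinset.card = ∑ _c ∈ S.toFinset, 9 := by
          rw [Finset.sum_const, smul_eq_mul, mul_comm]
      _ ≤ ∑ c ∈ S.toFinset, (sc c).card := by
          apply Finset.sum_le_sum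
          intro c hc
          exact key c (by simpa [hS] using (Set.mem_toFinset.1 hc))
  rw [hScard]
  omega
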